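/- arXiv:2202.12367 — 4 statements merged into one kernel-verified Lean document; each statement's English description precedes it below -/
import Mathlib

section
/- Let X be a Banach space, A : X → X a bounded invertible linear operator, and f : X → X a C¹ map that is Lipschitz with constant γ such that ‖A⁻¹‖·γ < 1. Then the inverse T of F(x) = A x + f(x) is differentiable at every point ξ, with derivative DT(ξ) = (A + Df(T(ξ)))⁻¹. -/
theorem stmt_3 {X : Type*} [NormedAddCommGroup X] [NormedSpace ℝ X] [CompleteSpace X]
    (A : X ≃L[ℝ] X) (f : X → X) (γ : ℝ)
    (hf1 : ContDiff ℝ 1 f)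
    (hf : ∀ x y : X, ‖f x - f y‖ ≤ γ * ‖x - y‖)
    (h : ‖(A.symm : X →L[ℝ] X)‖ * γ < 1)
    (T : X → X)
    (hT : ∀ ξ : X, A (T ξ) + f (T ξ) = ξ)
    (hT' : ∀ x : X, T (A x + f x) = x) :
    ∀ ξ : X, ∃ L : X →L[ℝ] X, HasFDerivAt T L ξ ∧
      ((A : X →L[ℝ] X) + fderiv ℝ f (T ξ)).comp L = ContinuousLinearMap.id ℝ X ∧
      L.comp ((A : X →L[ℝ] X) + fderiv ℝ f (T ξ)) = ContinuousLinearMap.id ℝ X := by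
  intro ξ
  cases subsingleton_or_nontrivial X with
  | inl hsub =>
      refine ⟨0, ?_, Subsingleton.elim _ _, Subsingleton.elim _ _⟩
      have : T = fun _ => T ξ := funext fun x => Subsingleton.elim _ _
      rw [this]
      exact hasFDerivAt_const _ _
  | inr hnt =>
      -- γ ≥ 0
      have hγ : 0 ≤ γ := by
        obtain ⟨x, hx⟩ := exists_ne (0 : X)
        have hx' : 0 < ‖x - 0‖ := by simpa [sub_ne_zero] using norm_pos_iff.2 (sub_ne_zero.2 hx)
        nlinarith [hf x 0, norm_nonneg (f x - f 0)]
      have hA : 0 ≤ ‖(A.symm : X →L[ℝ] X)‖ := norm_nonneg _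
      -- f is Lipschitz
      have hlip : LipschitzWith γ.toNNReal f := by
        refine LipschitzWith.of_dist_le_mul fun x y => ?_
        rw [dist_eq_norm, dist_eq_norm]
        simpa [Real.coe_toNNReal _ hγ] using hf x y
      -- norm of derivative
      set Df := fderiv ℝ f (T ξ) with hDf
      have hDfnorm : ‖Df‖ ≤ γ := by
        have := norm_fderiv_le_of_lipschitz ℝ (x₀ := T ξ) hlip
        simpa [Real.coe_toNNReal _ hγ] using this
      -- the unit 1 + A⁻¹ ∘ Df
      have hsmall : ‖-((A.symm : X →L[ℝ] X).comp Df)‖ < 1 := by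
        rw [norm_neg]
        calc ‖(A.symm : X →L[ℝ] X).comp Df‖ ≤ ‖(A.symm : X →L[ℝ] X)‖ * ‖Df‖ :=
              ContinuousLinearMap.opNorm_comp_le _ _
          _ ≤ ‖(A.symm : X →L[ℝ] X)‖ * γ := by
              exact mul_le_mul_of_nonneg_left hDfnorm hA
          _ < 1 := h
      let u : (X →L[ℝ] X)ˣ := Units.oneSub _ hsmall
      let e₀ : X ≃L[ℝ] X := ContinuousLinearEquiv.ofUnit u
      let e : X ≃L[ℝ] X := e₀.trans A
      have he : (e : X →L[ℝ] X) = (A : X →L[ℝ] X) + Df := by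
        ext x
        have h0 : (e : X →L[ℝ] X) x =
            A (((1 : X →L[ℝ] X) - (-(A.symm : X →L[ℝ] X).comp Df)) x) := rfl
        rw [h0]
        simp [ContinuousLinearMap.sub_apply, ContinuousLinearMap.one_apply,
          ContinuousLinearMap.comp_apply, ContinuousLinearMap.add_apply]
      -- F has derivative e at T ξ
      have hfd : DifferentiableAt ℝ f (T ξ) := (hf1.differentiable one_ne_zero).differentiableAt
      have hF : HasFDerivAt (fun x => A x + f x) (e : X →L[ℝ] X) (T ξ) := by
        rw [he]
        exact (A.hasFDerivAt).add hfd.hasFDerivAt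
      -- T is continuous (Lipschitz)
      have hTlip : ContinuousAt T ξ := by
        have key : ∀ x y : X, ‖T x - T y‖ ≤
            ‖(A.symm : X →L[ℝ] X)‖ / (1 - ‖(A.symm : X →L[ℝ] X)‖ * γ) * ‖x - y‖ := by
          intro x y
          have hxy : A (T x) - A (T y) = (x - y) - (f (T x) - f (T y)) := by
            have h1 := hT x; have h2 := hT y
            abel_nf
            rw [show A (T x) = x - f (T x) by linear_combination (norm := module) h1,
              show A (T y) = y - f (T y) by linear_combination (norm := module) h2]
            module
          have hb : ‖T x - T y‖ ≤ ‖(A.symm : X →L[ℝ] X)‖ *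
              (‖x - y‖ + γ * ‖T x - T y‖) := by
            calc ‖T x - T y‖ = ‖A.symm (A (T x) - A (T y))‖ := by simp
              _ ≤ ‖(A.symm : X →L[ℝ] X)‖ * ‖A (T x) - A (T y)‖ :=
                  (A.symm : X →L[ℝ] X).le_opNorm _
              _ ≤ ‖(A.symm : X →L[ℝ] X)‖ * (‖x - y‖ + γ * ‖T x - T y‖) := by
                  refine mul_le_mul_of_nonneg_left ?_ hA
                  rw [hxy]
                  exact (norm_sub_le _ _).trans (by gcongr; exact hf _ _)
          have h1 : 0 < 1 - ‖(A.symm : X →L[ℝ] X)‖ * γ := by linarith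
          rw [div_mul_eq_mul_div, le_div_iff₀ h1]
          nlinarith [norm_nonneg (T x - T y), norm_nonneg (x - y)]
        have hC : 0 ≤ ‖(A.symm : X →L[ℝ] X)‖ / (1 - ‖(A.symm : X →L[ℝ] X)‖ * γ) :=
          div_nonneg hA (by linarith)
        refine (LipschitzWith.of_dist_le_mul (K := ⟨_, hC⟩) fun x y => ?_).continuous.continuousAt
        rw [dist_eq_norm, dist_eq_norm]
        exact key x y
      have hmem : ∀ᶠ y in nhds ξ, (fun x => A x + f x) (T y) = y :=
        Filter.Eventually.of_forall fun y => hT y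
      have hderiv : HasFDerivAt T (e.symm : X →L[ℝ] X) ξ :=
        hF.of_local_left_inverse hTlip hmem
      refine ⟨(e.symm : X →L[ℝ] X), hderiv, ?_, ?_⟩
      · rw [← he]; ext x; simp
      · rw [← he]; ext x; simp
end

section
/- Let X be a Banach space and h̄ : X → X a C¹ map with ‖Dh̄(x)‖ < 1 for all x. Suppose h : X → X is a continuous map satisfying h(ξ) = -h̄(ξ + h(ξ)) for all ξ ∈ X. Then h is differentiable at every ξ, with derivative Dh(ξ) = -(Id + Dh̄(ξ + h(ξ)))⁻¹ ∘ Dh̄(ξ + h(ξ)), and h is C¹. -/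
open Topology Filter

theorem stmt_9 {X : Type*} [NormedAddCommGroup X] [NormedSpace ℝ X] [CompleteSpace X]
    (hbar : X → X) (h : X → X)
    (hbar1 : ContDiff ℝ 1 hbar)
    (hder : ∀ x : X, ‖fderiv ℝ hbar x‖ < 1)
    (hcont : Continuous h)
    (heq : ∀ ξ : X, h ξ = -hbar (ξ + h ξ)) :
    (∀ ξ : X, ∃ L : X →L[ℝ] X, HasFDerivAt h L ξ ∧
      (ContinuousLinearMap.id ℝ X + fderiv ℝ hbar (ξ + h ξ)).comp L
        = -(fderiv ℝ hbar (ξ + h ξ))) ∧ ContDiff ℝ 1 h := by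
  have hdiff : Differentiable ℝ hbar := hbar1.differentiable one_ne_zero
  -- strict contraction on segments
  have hlt : ∀ x y : X, x ≠ y → ‖hbar x - hbar y‖ < ‖x - y‖ := by
    intro x y hxy
    have hseg : IsCompact (segment ℝ y x) := by
      rw [segment_eq_image]
      exact (isCompact_Icc).image
        (((continuous_const.sub continuous_id).smul continuous_const).add
          (continuous_id.smul continuous_const))
    have hcontn : ContinuousOn (fun z => ‖fderiv ℝ hbar z‖) (segment ℝ y x) :=
      ((hbar1.continuous_fderiv one_ne_zero).norm).continuousOn
    obtain ⟨z, hz, hzmax⟩ := hseg.exists_isMaxOn ⟨y, left_mem_segment ℝ y x⟩ hcontn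
    have hbound : ∀ w ∈ segment ℝ y x, ‖fderiv ℝ hbar w‖ ≤ ‖fderiv ℝ hbar z‖ :=
      fun w hw => hzmax hw
    have key := (convex_segment y x).norm_image_sub_le_of_norm_fderiv_le
      (fun w _ => hdiff w) hbound (left_mem_segment ℝ y x) (right_mem_segment ℝ y x)
    calc ‖hbar x - hbar y‖ ≤ ‖fderiv ℝ hbar z‖ * ‖x - y‖ := key
      _ < 1 * ‖x - y‖ := by
          apply mul_lt_mul_of_pos_right (hder z)
          simpa [sub_eq_zero] using hxy
      _ = ‖x - y‖ := one_mul _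
  set F : X → X := fun x => x + hbar x with hFdef
  have hFinj : Function.Injective F := by
    intro x y hxy
    by_contra hne
    have h1 : hbar x - hbar y = y - x := by
      have h2 : x + hbar x = y + hbar y := hxy
      have : hbar x - hbar y = (y + hbar y) - hbar y - x := by rw [← h2]; abel
      rw [this]; abel
    have hc := hlt x y hne
    rw [h1, norm_sub_rev] at hc
    exact lt_irrefl _ hc
  set g : X → X := fun y => y + h y with hgdef
  have hFg : ∀ y : X, F (g y) = y := by
    intro y
    have : hbar (y + h y) = -h y := by rw [← neg_eq_iff_eq_neg.2 (heq y)]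
    simp only [hFdef, hgdef, this]
    abel
  have hgF : ∀ x : X, g (F x) = x := by
    intro x
    apply hFinj
    rw [hFg (F x)]
  have hFcd : ContDiff ℝ 1 F := contDiff_id.add hbar1
  -- per-point analysis
  have main : ∀ ξ : X, (∃ L : X →L[ℝ] X, HasFDerivAt h L ξ ∧
      (ContinuousLinearMap.id ℝ X + fderiv ℝ hbar (ξ + h ξ)).comp L
        = -(fderiv ℝ hbar (ξ + h ξ))) ∧ ContDiffAt ℝ 1 h ξ := by
    intro ξ
    set a : X := ξ + h ξ with ha
    set A : X →L[ℝ] X := fderiv ℝ hbar a with hA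
    have hAnorm : ‖-A‖ < 1 := by rw [norm_neg]; exact hder a
    set u : (X →L[ℝ] X)ˣ := Units.oneSub (-A) hAnorm with hu
    set e : X ≃L[ℝ] X := ContinuousLinearEquiv.ofUnit u with he
    have hecoe : (e : X →L[ℝ] X) = ContinuousLinearMap.id ℝ X + A := by
      ext x
      show (1 - -A) x = (ContinuousLinearMap.id ℝ X + A) x
      simp [sub_neg_eq_add]
    have hFa : F a = ξ := by
      have : g ξ = a := rfl
      rw [← this]; exact hFg ξ
    have hF' : HasFDerivAt F (e : X →L[ℝ] X) a := by
      rw [hecoe]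
      exact (hasFDerivAt_id a).add (hdiff a).hasFDerivAt
    have hsf : HasStrictFDerivAt F (e : X →L[ℝ] X) a :=
      hFcd.contDiffAt.hasStrictFDerivAt' hF' one_ne_zero
    have hgev : ∀ᶠ x in 𝓝 a, g (F x) = x := Filter.Eventually.of_forall hgF
    have hgstrict : HasStrictFDerivAt g ((e.symm : X →L[ℝ] X)) ξ := by
      rw [← hFa]
      exact hsf.to_local_left_inverse hgev
    have hfun : (fun y => g y - y) = h := by
      funext y; simp [hgdef]
    refine ⟨⟨(e.symm : X →L[ℝ] X) - ContinuousLinearMap.id ℝ X, ?_, ?_⟩, ?_⟩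
    · rw [← hfun]
      exact (hgstrict.hasFDerivAt).sub (hasFDerivAt_id ξ)
    · rw [ContinuousLinearMap.comp_sub, ← hecoe, e.coe_comp_coe_symm,
        ContinuousLinearMap.comp_id, hecoe]
      abel
    · -- ContDiffAt via local inverse
      have hli : ContDiffAt ℝ 1 (hsf.localInverse F (e : X ≃L[ℝ] X) a) ξ := by
        rw [← hFa]
        exact hFcd.contDiffAt.to_localInverse hF' one_ne_zero
      have hevq : g =ᶠ[𝓝 ξ] hsf.localInverse F (e : X ≃L[ℝ] X) a := by
        have := hsf.localInverse_unique hgev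
        rwa [hFa] at this
      have hgcd : ContDiffAt ℝ 1 g ξ := hli.congr_of_eventuallyEq hevq
      rw [← hfun]
      exact hgcd.sub contDiffAt_id
  exact ⟨fun ξ => (main ξ).1, contDiff_iff_contDiffAt.2 fun ξ => (main ξ).2⟩
end

section
/- Let λ > 0 and let M = ∏_{j∈ℤ}(1 + e^{-λ|j|}), which is finite. Suppose (γ_k)_{k∈ℤ} are nonnegative reals with γ_k ≤ 1/(e^{λ(|k|+1)} + e^{λ}) for all k and Σ_{k∈ℤ} γ_k < 1/(e^{λ}M). Then for every n ∈ ℤ, Σ_{k<n} e^{-λ(n-k-1)} γ_k ∏_{j=k}^{n-1} (e^{λ}/(1 - e^{λ}γ_j)) + Σ_{k>n} e^{-λ(k+1-n)} γ_k ∏_{j=n}^{k-1} (e^{λ} + γ_j) + e^{-λ}γ_n < 1. -/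
open Real in
theorem stmt_12 (lam : ℝ) (hlam : 0 < lam)
    (hM : Multipliable (fun j : ℤ => 1 + exp (-lam * |(j : ℝ)|)))
    (γ : ℤ → ℝ) (hγ0 : ∀ k, 0 ≤ γ k)
    (hγ1 : ∀ k : ℤ, γ k ≤ 1 / (exp (lam * (|(k : ℝ)| + 1)) + exp lam))
    (hγ2 : ∑' k : ℤ, γ k < 1 / (exp lam * ∏' j : ℤ, (1 + exp (-lam * |(j : ℝ)|)))) :
    ∀ n : ℤ,
      (∑' k : {k : ℤ // k < n}, exp (-lam * ((n : ℝ) - (k : ℤ) - 1)) * γ k *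
          ∏ j ∈ Finset.Ico (k : ℤ) n, (exp lam / (1 - exp lam * γ j))) +
      (∑' k : {k : ℤ // n < k}, exp (-lam * (((k : ℤ) : ℝ) + 1 - n)) * γ k *
          ∏ j ∈ Finset.Ico n (k : ℤ), (exp lam + γ j)) +
      exp (-lam) * γ n < 1 := by
  intro n
  set M : ℝ := ∏' j : ℤ, (1 + exp (-lam * |(j : ℝ)|)) with hMdef
  have hfac1 : ∀ j : ℤ, (1 : ℝ) ≤ 1 + exp (-lam * |(j : ℝ)|) := fun j =>
    le_add_of_nonneg_right (exp_pos _).le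
  have hone_le_prod : ∀ u : Finset ℤ, (1 : ℝ) ≤ ∏ j ∈ u, (1 + exp (-lam * |(j : ℝ)|)) := by
    intro u
    calc (1 : ℝ) = ∏ _j ∈ u, (1 : ℝ) := (Finset.prod_const_one).symm
      _ ≤ ∏ j ∈ u, (1 + exp (-lam * |(j : ℝ)|)) :=
        Finset.prod_le_prod (fun _ _ => zero_le_one) (fun j _ => hfac1 j)
  have hM1 : (1 : ℝ) ≤ M := ge_of_tendsto' hM.hasProd hone_le_prod
  have hprodM : ∀ u : Finset ℤ, ∏ j ∈ u, (1 + exp (-lam * |(j : ℝ)|)) ≤ M := by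
    intro u
    refine ge_of_tendsto hM.hasProd ?_
    refine Filter.eventually_atTop.2 ⟨u, fun t ht => ?_⟩
    rw [← Finset.prod_sdiff ht]
    refine le_mul_of_one_le_left ?_ (hone_le_prod _)
    exact Finset.prod_nonneg fun j _ => le_trans zero_le_one (hfac1 j)
  have hMpos : (0 : ℝ) < M := lt_of_lt_of_le one_pos hM1
  -- basic bound on γ
  have hγe : ∀ k : ℤ, γ k ≤ exp (-(lam * (|(k : ℝ)| + 1))) := by
    intro k
    have h1 : 1 / (exp (lam * (|(k : ℝ)| + 1)) + exp lam)
        ≤ 1 / exp (lam * (|(k : ℝ)| + 1)) :=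
      one_div_le_one_div_of_le (exp_pos _) (le_add_of_nonneg_right (exp_pos _).le)
    calc γ k ≤ 1 / (exp (lam * (|(k : ℝ)| + 1)) + exp lam) := hγ1 k
      _ ≤ 1 / exp (lam * (|(k : ℝ)| + 1)) := h1
      _ = exp (-(lam * (|(k : ℝ)| + 1))) := by rw [exp_neg, one_div]
  -- summability of γ
  have hsum_exp : Summable (fun k : ℤ => exp (-(lam * (|(k : ℝ)| + 1)))) := by
    have h0 : Summable (fun m : ℕ => exp (-lam) ^ m) :=
      summable_geometric_of_lt_one (exp_pos _).le (exp_lt_one_iff.mpr (by linarith))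
    have h1 : Summable (fun k : ℤ => exp (-lam) ^ k.natAbs) := by
      refine Summable.of_nat_of_neg ?_ ?_ <;> simpa using h0
    refine (h1.mul_left (exp (-lam))).congr fun k => ?_
    have habs : |(k : ℝ)| = (k.natAbs : ℝ) := by rw [Nat.cast_natAbs, Int.cast_abs]
    rw [← exp_nat_mul, ← exp_add, habs]
    congr 1
    ring
  have hγsum : Summable γ := Summable.of_nonneg_of_le hγ0 hγe hsum_exp
  -- factor bounds
  have hden : ∀ j : ℤ, exp lam * γ j ≤ 1 / (exp (lam * |(j : ℝ)|) + 1) := by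
    intro j
    have h1 : exp lam * γ j ≤ exp lam * (1 / (exp (lam * (|(j : ℝ)| + 1)) + exp lam)) :=
      mul_le_mul_of_nonneg_left (hγ1 j) (exp_pos _).le
    refine h1.trans_eq ?_
    have he : exp (lam * (|(j : ℝ)| + 1)) = exp (lam * |(j : ℝ)|) * exp lam := by
      rw [← exp_add]; congr 1; ring
    rw [he]
    have h2 : (0 : ℝ) < exp (lam * |(j : ℝ)|) + 1 := by positivity
    field_simp
  have hdenpos : ∀ j : ℤ, 0 < 1 - exp lam * γ j := by
    intro j
    have h1 := hden j
    have h2 : 1 / (exp (lam * |(j : ℝ)|) + 1) < 1 := by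
      rw [div_lt_one (by positivity)]
      linarith [exp_pos (lam * |(j : ℝ)|)]
    linarith
  have hfacA : ∀ j : ℤ, exp lam / (1 - exp lam * γ j)
      ≤ exp lam * (1 + exp (-lam * |(j : ℝ)|)) := by
    intro j
    set E : ℝ := exp (lam * |(j : ℝ)|) with hE
    have hEpos : 0 < E := exp_pos _
    have hElow : E / (E + 1) ≤ 1 - exp lam * γ j := by
      have := hden j
      have h2 : E / (E + 1) = 1 - 1 / (E + 1) := by field_simp; ring
      linarith
    have hinv : 1 / (1 - exp lam * γ j) ≤ (E + 1) / E := by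
      have h3 : (0 : ℝ) < E / (E + 1) := by positivity
      calc 1 / (1 - exp lam * γ j) ≤ 1 / (E / (E + 1)) :=
            one_div_le_one_div_of_le h3 hElow
        _ = (E + 1) / E := one_div_div _ _
    have hexp : exp (-lam * |(j : ℝ)|) = 1 / E := by
      rw [hE, one_div, ← exp_neg]; congr 1; ring
    have h4 : (E + 1) / E = 1 + exp (-lam * |(j : ℝ)|) := by
      rw [hexp]; field_simp
    calc exp lam / (1 - exp lam * γ j) = exp lam * (1 / (1 - exp lam * γ j)) := by ring
      _ ≤ exp lam * ((E + 1) / E) := mul_le_mul_of_nonneg_left hinv (exp_pos _).le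
      _ = exp lam * (1 + exp (-lam * |(j : ℝ)|)) := by rw [h4]
  have hfacB : ∀ j : ℤ, exp lam + γ j ≤ exp lam * (1 + exp (-lam * |(j : ℝ)|)) := by
    intro j
    have h1 : γ j ≤ exp (lam + -lam * |(j : ℝ)|) := by
      refine (hγe j).trans (exp_le_exp.mpr ?_)
      have : (0 : ℝ) ≤ |(j : ℝ)| := abs_nonneg _
      nlinarith
    have h2 : exp lam * (1 + exp (-lam * |(j : ℝ)|))
        = exp lam + exp (lam + -lam * |(j : ℝ)|) := by
      rw [exp_add]; ring
    linarith
  -- generic finite product bound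
  have hprod : ∀ a b : ℤ, a ≤ b → ∀ g : ℤ → ℝ, (∀ j, 0 ≤ g j) →
      (∀ j, g j ≤ exp lam * (1 + exp (-lam * |(j : ℝ)|))) →
      ∏ j ∈ Finset.Ico a b, g j ≤ exp (lam * ((b : ℝ) - a)) * M := by
    intro a b hab g hg0 hgle
    calc ∏ j ∈ Finset.Ico a b, g j
        ≤ ∏ j ∈ Finset.Ico a b, exp lam * (1 + exp (-lam * |(j : ℝ)|)) :=
          Finset.prod_le_prod (fun j _ => hg0 j) (fun j _ => hgle j)
      _ = exp lam ^ (Finset.Ico a b).card *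
            ∏ j ∈ Finset.Ico a b, (1 + exp (-lam * |(j : ℝ)|)) := by
          rw [Finset.prod_mul_distrib, Finset.prod_const]
      _ ≤ exp (lam * ((b : ℝ) - a)) * M := by
          have hcard : ((Finset.Ico a b).card : ℝ) = (b : ℝ) - a := by
            rw [Int.card_Ico]
            have h : ((b - a).toNat : ℤ) = b - a := Int.toNat_of_nonneg (by linarith)
            exact_mod_cast h
          have h1 : exp lam ^ (Finset.Ico a b).card = exp (lam * ((b : ℝ) - a)) := by
            rw [← exp_nat_mul, hcard]; congr 1; ring
          rw [h1]
          have h2 : ∏ j ∈ Finset.Ico a b, (1 + exp (-lam * |(j : ℝ)|)) ≤ M :=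
            hprodM _
          exact mul_le_mul_of_nonneg_left h2 (exp_pos _).le
  -- termwise bounds
  have htermA : ∀ k : {k : ℤ // k < n},
      exp (-lam * ((n : ℝ) - (k : ℤ) - 1)) * γ k *
        ∏ j ∈ Finset.Ico (k : ℤ) n, (exp lam / (1 - exp lam * γ j))
      ≤ exp lam * M * γ k := by
    rintro ⟨k, hk⟩
    simp only []
    have hp := hprod k n hk.le (fun j => exp lam / (1 - exp lam * γ j))
      (fun j => div_nonneg (exp_pos _).le (hdenpos j).le) hfacA
    have hnn : 0 ≤ exp (-lam * ((n : ℝ) - (k : ℤ) - 1)) * γ k :=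
      mul_nonneg (exp_pos _).le (hγ0 k)
    calc exp (-lam * ((n : ℝ) - (k : ℤ) - 1)) * γ k *
          ∏ j ∈ Finset.Ico (k : ℤ) n, (exp lam / (1 - exp lam * γ j))
        ≤ exp (-lam * ((n : ℝ) - (k : ℤ) - 1)) * γ k *
            (exp (lam * ((n : ℝ) - (k : ℤ))) * M) := mul_le_mul_of_nonneg_left hp hnn
      _ = exp (-lam * ((n : ℝ) - (k : ℤ) - 1)) * exp (lam * ((n : ℝ) - (k : ℤ))) *
            M * γ k := by ring
      _ = exp lam * M * γ k := by
          rw [← exp_add]; congr 2; ring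
  have htermB : ∀ k : {k : ℤ // n < k},
      exp (-lam * (((k : ℤ) : ℝ) + 1 - n)) * γ k *
        ∏ j ∈ Finset.Ico n (k : ℤ), (exp lam + γ j)
      ≤ exp lam * M * γ k := by
    rintro ⟨k, hk⟩
    simp only []
    have hp := hprod n k hk.le (fun j => exp lam + γ j)
      (fun j => add_nonneg (exp_pos _).le (hγ0 j)) hfacB
    have hnn : 0 ≤ exp (-lam * (((k : ℤ) : ℝ) + 1 - n)) * γ k :=
      mul_nonneg (exp_pos _).le (hγ0 k)
    calc exp (-lam * (((k : ℤ) : ℝ) + 1 - n)) * γ k *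
          ∏ j ∈ Finset.Ico n (k : ℤ), (exp lam + γ j)
        ≤ exp (-lam * (((k : ℤ) : ℝ) + 1 - n)) * γ k *
            (exp (lam * (((k : ℤ) : ℝ) - n)) * M) := mul_le_mul_of_nonneg_left hp hnn
      _ = exp (-lam * (((k : ℤ) : ℝ) + 1 - n)) * exp (lam * (((k : ℤ) : ℝ) - n)) *
            M * γ k := by ring
      _ = exp (-lam) * M * γ k := by rw [← exp_add]; congr 2; ring
      _ ≤ exp lam * M * γ k := by
          have h1 : exp (-lam) ≤ exp lam := exp_le_exp.mpr (by linarith)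
          have := mul_nonneg hMpos.le (hγ0 k)
          nlinarith
  -- nonnegativity of terms
  have hnnA : ∀ k : {k : ℤ // k < n},
      0 ≤ exp (-lam * ((n : ℝ) - (k : ℤ) - 1)) * γ k *
        ∏ j ∈ Finset.Ico (k : ℤ) n, (exp lam / (1 - exp lam * γ j)) := fun k =>
    mul_nonneg (mul_nonneg (exp_pos _).le (hγ0 k))
      (Finset.prod_nonneg fun j _ => div_nonneg (exp_pos _).le (hdenpos j).le)
  have hnnB : ∀ k : {k : ℤ // n < k},
      0 ≤ exp (-lam * (((k : ℤ) : ℝ) + 1 - n)) * γ k *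
        ∏ j ∈ Finset.Ico n (k : ℤ), (exp lam + γ j) := fun k =>
    mul_nonneg (mul_nonneg (exp_pos _).le (hγ0 k))
      (Finset.prod_nonneg fun j _ => add_nonneg (exp_pos _).le (hγ0 j))
  -- summability of the subtype sums
  have hsubA : Summable (fun k : {k : ℤ // k < n} => exp lam * M * γ k) := by
    exact (hγsum.subtype {k : ℤ | k < n}).mul_left _
  have hsubB : Summable (fun k : {k : ℤ // n < k} => exp lam * M * γ k) := by
    exact (hγsum.subtype {k : ℤ | n < k}).mul_left _
  have hSA : Summable (fun k : {k : ℤ // k < n} =>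
      exp (-lam * ((n : ℝ) - (k : ℤ) - 1)) * γ k *
        ∏ j ∈ Finset.Ico (k : ℤ) n, (exp lam / (1 - exp lam * γ j))) :=
    Summable.of_nonneg_of_le hnnA htermA hsubA
  have hSB : Summable (fun k : {k : ℤ // n < k} =>
      exp (-lam * (((k : ℤ) : ℝ) + 1 - n)) * γ k *
        ∏ j ∈ Finset.Ico n (k : ℤ), (exp lam + γ j)) :=
    Summable.of_nonneg_of_le hnnB htermB hsubB
  -- tsum bounds
  have hTA : (∑' k : {k : ℤ // k < n}, exp (-lam * ((n : ℝ) - (k : ℤ) - 1)) * γ k *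
      ∏ j ∈ Finset.Ico (k : ℤ) n, (exp lam / (1 - exp lam * γ j)))
      ≤ exp lam * M * ∑' k : {k : ℤ // k < n}, γ (k : ℤ) := by
    rw [← tsum_mul_left]
    exact Summable.tsum_le_tsum htermA hSA hsubA
  have hTB : (∑' k : {k : ℤ // n < k}, exp (-lam * (((k : ℤ) : ℝ) + 1 - n)) * γ k *
      ∏ j ∈ Finset.Ico n (k : ℤ), (exp lam + γ j))
      ≤ exp lam * M * ∑' k : {k : ℤ // n < k}, γ (k : ℤ) := by
    rw [← tsum_mul_left]
    exact Summable.tsum_le_tsum htermB hSB hsubB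
  have hTC : exp (-lam) * γ n ≤ exp lam * M * γ n := by
    have h1 : exp (-lam) ≤ exp lam * M := by
      calc exp (-lam) ≤ exp lam := exp_le_exp.mpr (by linarith)
        _ = exp lam * 1 := by ring
        _ ≤ exp lam * M := mul_le_mul_of_nonneg_left hM1 (exp_pos _).le
    exact mul_le_mul_of_nonneg_right h1 (hγ0 n)
  -- partition of the tsum of γ
  have hpart : (∑' k : {k : ℤ // k < n}, γ (k : ℤ)) +
      (∑' k : {k : ℤ // n < k}, γ (k : ℤ)) + γ n = ∑' k : ℤ, γ k := by
    have h1 : (∑' k : {k : ℤ // k < n}, γ (k : ℤ))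
        = ∑' k : ℤ, Set.indicator {k : ℤ | k < n} γ k := tsum_subtype _ _
    have h2 : (∑' k : {k : ℤ // n < k}, γ (k : ℤ))
        = ∑' k : ℤ, Set.indicator {k : ℤ | n < k} γ k := tsum_subtype _ _
    have h3 : γ n = ∑' k : ℤ, Set.indicator {n} γ k := by
      have : (fun k : ℤ => Set.indicator ({n} : Set ℤ) γ k)
          = fun k : ℤ => if k = n then γ n else 0 := by
        funext k
        by_cases h : k = n <;> simp [Set.indicator_apply, h]
      rw [this, tsum_ite_eq]
    rw [h1, h2, h3]
    have hi1 : Summable (Set.indicator {k : ℤ | k < n} γ) := hγsum.indicator _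
    have hi2 : Summable (Set.indicator {k : ℤ | n < k} γ) := hγsum.indicator _
    have hi3 : Summable (Set.indicator ({n} : Set ℤ) γ) := hγsum.indicator _
    rw [← Summable.tsum_add hi1 hi2, ← Summable.tsum_add (hi1.add hi2) hi3]
    refine tsum_congr fun k => ?_
    rcases lt_trichotomy k n with h | h | h
    · simp [Set.indicator_apply, h, not_lt_of_gt h, h.ne]
    · simp [Set.indicator_apply, h, lt_irrefl]
    · simp [Set.indicator_apply, h, not_lt_of_gt h, h.ne']
  -- combine
  have hfin : exp lam * M * (∑' k : ℤ, γ k) < 1 := by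
    have hpos : 0 < exp lam * M := mul_pos (exp_pos _) hMpos
    have := (mul_lt_mul_of_pos_left hγ2 hpos)
    rwa [mul_one_div, div_self hpos.ne'] at this
  calc (∑' k : {k : ℤ // k < n}, exp (-lam * ((n : ℝ) - (k : ℤ) - 1)) * γ k *
          ∏ j ∈ Finset.Ico (k : ℤ) n, (exp lam / (1 - exp lam * γ j))) +
      (∑' k : {k : ℤ // n < k}, exp (-lam * (((k : ℤ) : ℝ) + 1 - n)) * γ k *
          ∏ j ∈ Finset.Ico n (k : ℤ), (exp lam + γ j)) +
      exp (-lam) * γ n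
      ≤ exp lam * M * (∑' k : {k : ℤ // k < n}, γ (k : ℤ)) +
        exp lam * M * (∑' k : {k : ℤ // n < k}, γ (k : ℤ)) +
        exp lam * M * γ n := by
        exact add_le_add (add_le_add hTA hTB) hTC
    _ = exp lam * M * (∑' k : ℤ, γ k) := by rw [← hpart]; ring
    _ < 1 := hfin
end

section
/- Let θ : ℤ → ℝ be a nondecreasing sequence with θ_n ≥ 1 and θ_{n+1}/θ_n ≤ T for some T ≥ 1 and all n ∈ ℤ. Let M = ∏_{j∈ℤ}(1 + 2^{-|j|}) and suppose (γ_k)_{k∈ℤ} are nonnegative reals with γ_k < 1/(T(2^{|k|+1}+1)) and Σ_{k∈ℤ} γ_k < 1/(TM). Then for every n ∈ ℤ: Σ_{k<n} (θ_{k+1}/θ_n) γ_k ∏_{j=k}^{n-1} ((θ_{j+1}/θ_j)/(1 - (θ_{j+1}/θ_j)γ_j)) + Σ_{k>n} γ_k ∏_{j=n}^{k-1}(1+γ_j) + γ_n < 1. -/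
set_option maxHeartbeats 1000000 in
theorem stmt_19 (θ : ℤ → ℝ) (T : ℝ) (hT : 1 ≤ T)
    (hθ1 : ∀ n : ℤ, 1 ≤ θ n)
    (hθ2 : ∀ n : ℤ, θ n ≤ θ (n + 1))
    (hθ3 : ∀ n : ℤ, θ (n + 1) / θ n ≤ T)
    (γ : ℤ → ℝ) (hγ0 : ∀ k, 0 ≤ γ k)
    (hγ1 : ∀ k : ℤ, γ k < 1 / (T * (2 ^ (|k| + 1) + 1)))
    (hγ2 : ∑' k : ℤ, γ k < 1 / (T * ∏' j : ℤ, (1 + (2 : ℝ) ^ (-|j|)))) :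
    ∀ n : ℤ,
      (∑' k : {k : ℤ // k < n}, (θ ((k : ℤ) + 1) / θ n) * γ k *
          ∏ j ∈ Finset.Ico (k : ℤ) n, ((θ (j + 1) / θ j) / (1 - (θ (j + 1) / θ j) * γ j))) +
      (∑' k : {k : ℤ // n < k}, γ k * ∏ j ∈ Finset.Ico n (k : ℤ), (1 + γ j)) +
      γ n < 1 := by
  intro n
  have h2 : ∀ j : ℤ, (0:ℝ) < 2 ^ (-|j|) := fun j => zpow_pos (by norm_num) _
  have hg : Summable (fun j : ℤ => (2:ℝ) ^ (-|j|)) := by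
    apply Summable.of_nat_of_neg (f := fun j : ℤ => (2:ℝ) ^ (-|j|)) <;>
    · apply (summable_geometric_of_lt_one (r := (2:ℝ)⁻¹) (by norm_num) (by norm_num)).congr
      intro m
      simp [zpow_neg, ← inv_pow]
  have hpos : ∀ j : ℤ, (0:ℝ) < 1 + 2 ^ (-|j|) := fun j => by positivity
  have hlogpos : ∀ j : ℤ, 0 ≤ Real.log (1 + (2:ℝ) ^ (-|j|)) :=
    fun j => Real.log_nonneg (le_add_of_nonneg_right (h2 j).le)
  have hlog : Summable (fun j : ℤ => Real.log (1 + (2:ℝ) ^ (-|j|))) := by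
    apply Summable.of_nonneg_of_le hlogpos _ hg
    intro j
    have := Real.log_le_sub_one_of_pos (hpos j)
    linarith
  set M : ℝ := ∏' j : ℤ, (1 + (2 : ℝ) ^ (-|j|)) with hMdef
  have hMeq : M = Real.exp (∑' j : ℤ, Real.log (1 + (2:ℝ) ^ (-|j|))) := by
    have h := Real.rexp_tsum_eq_tprod (f := fun j : ℤ => 1 + (2:ℝ) ^ (-|j|)) hpos hlog
    exact h.symm
  have hprodle : ∀ s : Finset ℤ, ∏ j ∈ s, (1 + (2:ℝ) ^ (-|j|)) ≤ M := by
    intro s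
    have h1 : ∏ j ∈ s, (1 + (2:ℝ) ^ (-|j|))
        = Real.exp (∑ j ∈ s, Real.log (1 + (2:ℝ) ^ (-|j|))) := by
      rw [Real.exp_sum]
      exact Finset.prod_congr rfl fun j _ => (Real.exp_log (hpos j)).symm
    rw [h1, hMeq]
    exact Real.exp_le_exp.2 (Summable.sum_le_tsum s (fun i _ => hlogpos i) hlog)
  have hM1 : (1:ℝ) ≤ M := by simpa using hprodle ∅
  have hTpos : (0:ℝ) < T := lt_of_lt_of_le one_pos hT
  have hTM : (0:ℝ) < T * M := mul_pos hTpos (lt_of_lt_of_le one_pos hM1)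
  -- gamma is dominated by 2^{-|k|}
  have hγg : ∀ k : ℤ, γ k ≤ 2 ^ (-|k|) := by
    intro k
    have ha : (0:ℝ) < 2 ^ (|k|) := zpow_pos (by norm_num) _
    have hsplit : (2:ℝ) ^ (|k| + 1) = 2 ^ (|k|) * 2 := zpow_add_one₀ (by norm_num) _
    have h1 : (2:ℝ) ^ (|k|) ≤ T * (2 ^ (|k|+1) + 1) := by
      rw [hsplit]; nlinarith
    calc γ k ≤ 1 / (T * (2 ^ (|k|+1) + 1)) := (hγ1 k).le
      _ ≤ 1 / 2 ^ (|k|) := one_div_le_one_div_of_le ha h1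
      _ = 2 ^ (-|k|) := by rw [zpow_neg, one_div]
  have hsγ : Summable γ := Summable.of_nonneg_of_le hγ0 hγg hg
  -- ratio facts
  have hθpos : ∀ m : ℤ, (0:ℝ) < θ m := fun m => lt_of_lt_of_le one_pos (hθ1 m)
  have hr0 : ∀ j : ℤ, (0:ℝ) ≤ θ (j+1) / θ j :=
    fun j => div_nonneg (hθpos _).le (hθpos _).le
  have hTγ : ∀ j : ℤ, T * γ j < 1 / (2 ^ (|j|+1) + 1) := by
    intro j
    have h := mul_lt_mul_of_pos_left (hγ1 j) hTpos
    rwa [one_div, mul_inv, ← mul_assoc, mul_inv_cancel₀ hTpos.ne', one_mul, ← one_div] at h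
  have hrγ : ∀ j : ℤ, θ (j+1) / θ j * γ j ≤ T * γ j :=
    fun j => mul_le_mul_of_nonneg_right (hθ3 j) (hγ0 j)
  have hXpos : ∀ j : ℤ, (0:ℝ) < 2 ^ (|j|+1) := fun j => zpow_pos (by norm_num) _
  have hden : ∀ j : ℤ, (0:ℝ) < 1 - θ (j+1) / θ j * γ j := by
    intro j
    have h1 : (1:ℝ) / (2 ^ (|j|+1) + 1) ≤ 1 := by
      rw [div_le_one (by linarith [hXpos j])]; linarith [hXpos j]
    have := hTγ j
    have := hrγ j
    linarith
  -- key factor bound for the left sum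
  have hkey1 : ∀ j : ℤ, θ (j+1) / θ j / (1 - θ (j+1) / θ j * γ j)
      ≤ (θ (j+1) / θ j) * (1 + (2:ℝ) ^ (-|j|)) := by
    intro j
    have hX : (0:ℝ) < 2 ^ (|j|+1) := hXpos j
    have hX1 : (0:ℝ) < 2 ^ (|j|+1) + 1 := by linarith
    have hlow : (2:ℝ) ^ (|j|+1) / (2 ^ (|j|+1) + 1) ≤ 1 - θ (j+1) / θ j * γ j := by
      have heq : (2:ℝ) ^ (|j|+1) / (2 ^ (|j|+1) + 1) = 1 - 1 / (2 ^ (|j|+1) + 1) := by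
        field_simp
        ring
      rw [heq]
      have := hTγ j
      have := hrγ j
      linarith
    have hinv : 1 / (1 - θ (j+1) / θ j * γ j)
        ≤ (2 ^ (|j|+1) + 1) / 2 ^ (|j|+1) := by
      have := one_div_le_one_div_of_le (div_pos hX hX1) hlow
      rwa [one_div_div] at this
    have hXf : ((2:ℝ) ^ (|j|+1) + 1) / 2 ^ (|j|+1) ≤ 1 + (2:ℝ) ^ (-|j|) := by
      have heq : ((2:ℝ) ^ (|j|+1) + 1) / 2 ^ (|j|+1) = 1 + 1 / 2 ^ (|j|+1) := by
        field_simp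
      rw [heq]
      have h1 : (1:ℝ) / 2 ^ (|j|+1) ≤ 2 ^ (-|j|) := by
        rw [one_div, ← zpow_neg]
        exact zpow_le_zpow_right₀ (by norm_num) (by omega)
      linarith
    calc θ (j+1) / θ j / (1 - θ (j+1) / θ j * γ j)
        = (θ (j+1) / θ j) * (1 / (1 - θ (j+1) / θ j * γ j)) := by
          rw [div_eq_mul_one_div]
      _ ≤ (θ (j+1) / θ j) * (1 + (2:ℝ) ^ (-|j|)) :=
          mul_le_mul_of_nonneg_left (le_trans hinv hXf) (hr0 j)
  -- telescoping
  have htel : ∀ k m : ℤ, k ≤ m → ∏ j ∈ Finset.Ico k m, (θ (j+1) / θ j) = θ m / θ k := by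
    intro k
    refine Int.le_induction ?_ ?_
    · simp [Finset.Ico_self, div_self (hθpos k).ne']
    · intro p hp ih
      have hins : Finset.Ico k (p+1) = insert p (Finset.Ico k p) := by
        ext x; simp only [Finset.mem_Ico, Finset.mem_insert]; omega
      rw [hins, Finset.prod_insert (by simp), ih]
      field_simp [(hθpos p).ne', (hθpos k).ne']
  -- per-term bound, left sum
  have hbound1 : ∀ k : ℤ, k < n →
      (θ (k + 1) / θ n) * γ k *
        ∏ j ∈ Finset.Ico k n, ((θ (j + 1) / θ j) / (1 - (θ (j + 1) / θ j) * γ j))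
      ≤ T * M * γ k := by
    intro k hk
    have hP : ∏ j ∈ Finset.Ico k n, ((θ (j + 1) / θ j) / (1 - (θ (j + 1) / θ j) * γ j))
        ≤ ∏ j ∈ Finset.Ico k n, ((θ (j+1) / θ j) * (1 + (2:ℝ) ^ (-|j|))) := by
      apply Finset.prod_le_prod
      · exact fun j _ => div_nonneg (hr0 j) (hden j).le
      · exact fun j _ => hkey1 j
    have hsplit : ∏ j ∈ Finset.Ico k n, ((θ (j+1) / θ j) * (1 + (2:ℝ) ^ (-|j|)))
        = (θ n / θ k) * ∏ j ∈ Finset.Ico k n, (1 + (2:ℝ) ^ (-|j|)) := by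
      rw [Finset.prod_mul_distrib, htel k n hk.le]
    have hPM : ∏ j ∈ Finset.Ico k n, ((θ (j + 1) / θ j) / (1 - (θ (j + 1) / θ j) * γ j))
        ≤ (θ n / θ k) * M := by
      refine le_trans hP (le_trans hsplit.le ?_)
      exact mul_le_mul_of_nonneg_left (hprodle _) (div_nonneg (hθpos n).le (hθpos k).le)
    calc (θ (k + 1) / θ n) * γ k *
          ∏ j ∈ Finset.Ico k n, ((θ (j + 1) / θ j) / (1 - (θ (j + 1) / θ j) * γ j))
        ≤ (θ (k + 1) / θ n) * γ k * ((θ n / θ k) * M) := by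
          apply mul_le_mul_of_nonneg_left hPM
          exact mul_nonneg (div_nonneg (hθpos _).le (hθpos _).le) (hγ0 k)
      _ = (θ (k + 1) / θ k) * γ k * M := by
          field_simp [(hθpos n).ne', (hθpos k).ne']
      _ ≤ T * γ k * M := by
          apply mul_le_mul_of_nonneg_right _ (le_trans zero_le_one hM1)
          exact mul_le_mul_of_nonneg_right (hθ3 k) (hγ0 k)
      _ = T * M * γ k := by ring
  -- per-term bound, right sum
  have hbound2 : ∀ k : ℤ, n < k →
      γ k * ∏ j ∈ Finset.Ico n k, (1 + γ j) ≤ T * M * γ k := by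
    intro k hk
    have h1 : ∏ j ∈ Finset.Ico n k, (1 + γ j)
        ≤ ∏ j ∈ Finset.Ico n k, (1 + (2:ℝ) ^ (-|j|)) := by
      apply Finset.prod_le_prod
      · exact fun j _ => by linarith [hγ0 j]
      · exact fun j _ => by linarith [hγg j]
    have h2' : ∏ j ∈ Finset.Ico n k, (1 + γ j) ≤ M := le_trans h1 (hprodle _)
    calc γ k * ∏ j ∈ Finset.Ico n k, (1 + γ j) ≤ γ k * M :=
          mul_le_mul_of_nonneg_left h2' (hγ0 k)
      _ ≤ T * M * γ k := by
          nlinarith [mul_nonneg (mul_nonneg (sub_nonneg.2 hT)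
            (le_trans zero_le_one hM1 : (0:ℝ) ≤ M)) (hγ0 k)]
  -- summability over subtypes
  have hsub1 : Summable (fun k : {k : ℤ // k < n} => T * M * γ (k : ℤ)) :=
    (hsγ.mul_left (T * M)).subtype {k : ℤ | k < n}
  have hsub2 : Summable (fun k : {k : ℤ // n < k} => T * M * γ (k : ℤ)) :=
    (hsγ.mul_left (T * M)).subtype {k : ℤ | n < k}
  have hγsub1 : Summable (fun k : {k : ℤ // k < n} => γ (k : ℤ)) :=
    hsγ.subtype {k : ℤ | k < n}
  have hγsub2 : Summable (fun k : {k : ℤ // n < k} => γ (k : ℤ)) :=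
    hsγ.subtype {k : ℤ | n < k}
  have ht1nonneg : ∀ k : {k : ℤ // k < n}, 0 ≤ (θ ((k : ℤ) + 1) / θ n) * γ k *
      ∏ j ∈ Finset.Ico (k : ℤ) n, ((θ (j + 1) / θ j) / (1 - (θ (j + 1) / θ j) * γ j)) := by
    intro k
    apply mul_nonneg (mul_nonneg (div_nonneg (hθpos _).le (hθpos _).le) (hγ0 _))
    exact Finset.prod_nonneg fun j _ => div_nonneg (hr0 j) (hden j).le
  have ht2nonneg : ∀ k : {k : ℤ // n < k},
      0 ≤ γ (k : ℤ) * ∏ j ∈ Finset.Ico n (k : ℤ), (1 + γ j) := by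
    intro k
    exact mul_nonneg (hγ0 _) (Finset.prod_nonneg fun j _ => by linarith [hγ0 j])
  have hst1 : Summable (fun k : {k : ℤ // k < n} => (θ ((k : ℤ) + 1) / θ n) * γ k *
      ∏ j ∈ Finset.Ico (k : ℤ) n, ((θ (j + 1) / θ j) / (1 - (θ (j + 1) / θ j) * γ j))) :=
    Summable.of_nonneg_of_le ht1nonneg (fun k => hbound1 k k.2) hsub1
  have hst2 : Summable (fun k : {k : ℤ // n < k} =>
      γ (k : ℤ) * ∏ j ∈ Finset.Ico n (k : ℤ), (1 + γ j)) :=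
    Summable.of_nonneg_of_le ht2nonneg (fun k => hbound2 k k.2) hsub2
  -- sum bounds
  have hS1 : (∑' k : {k : ℤ // k < n}, (θ ((k : ℤ) + 1) / θ n) * γ k *
        ∏ j ∈ Finset.Ico (k : ℤ) n, ((θ (j + 1) / θ j) / (1 - (θ (j + 1) / θ j) * γ j)))
      ≤ T * M * ∑' k : {k : ℤ // k < n}, γ (k : ℤ) := by
    rw [← tsum_mul_left]
    exact Summable.tsum_le_tsum (fun k => hbound1 k k.2) hst1 hsub1
  have hS2 : (∑' k : {k : ℤ // n < k}, γ (k : ℤ) * ∏ j ∈ Finset.Ico n (k : ℤ), (1 + γ j))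
      ≤ T * M * ∑' k : {k : ℤ // n < k}, γ (k : ℤ) := by
    rw [← tsum_mul_left]
    exact Summable.tsum_le_tsum (fun k => hbound2 k k.2) hst2 hsub2
  have hS3 : γ n ≤ T * M * γ n := by
    nlinarith [mul_nonneg (sub_nonneg.2 (one_le_mul_of_one_le_of_one_le hT hM1 : (1:ℝ) ≤ T * M)) (hγ0 n)]
  -- splitting the full sum
  have hsplitsum : (∑' k : {k : ℤ // k < n}, γ (k : ℤ))
      + (∑' k : {k : ℤ // n < k}, γ (k : ℤ)) + γ n = ∑' k : ℤ, γ k := by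
    have hA : Summable (Set.indicator {k : ℤ | k < n} γ) := hsγ.indicator _
    have hB : Summable (Set.indicator {k : ℤ | n < k} γ) := hsγ.indicator _
    have hC : Summable (Set.indicator ({n} : Set ℤ) γ) := hsγ.indicator _
    have hpt : ∀ k : ℤ, Set.indicator {k : ℤ | k < n} γ k
        + Set.indicator {k : ℤ | n < k} γ k + Set.indicator ({n} : Set ℤ) γ k = γ k := by
      intro k
      rcases lt_trichotomy k n with h | h | h
      · simp [Set.indicator_apply, h, not_lt_of_gt h, h.ne, asymm h]
      · simp [Set.indicator_apply, h, lt_irrefl]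
      · simp [Set.indicator_apply, h, not_lt_of_gt h, h.ne', asymm h]
    have e1 : (∑' k : {k : ℤ // k < n}, γ (k : ℤ))
        = ∑' k : ℤ, Set.indicator {k : ℤ | k < n} γ k := tsum_subtype _ _
    have e2 : (∑' k : {k : ℤ // n < k}, γ (k : ℤ))
        = ∑' k : ℤ, Set.indicator {k : ℤ | n < k} γ k := tsum_subtype _ _
    have e3 : γ n = ∑' k : ℤ, Set.indicator ({n} : Set ℤ) γ k := by
      rw [← tsum_subtype, tsum_singleton]
    rw [e1, e2, e3, ← Summable.tsum_add hA hB, ← Summable.tsum_add (hA.add hB) hC]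
    exact tsum_congr hpt
  have hfinal : T * M * (∑' k : ℤ, γ k) < 1 := by
    have := (lt_div_iff₀ hTM).mp hγ2
    linarith
  calc (∑' k : {k : ℤ // k < n}, (θ ((k : ℤ) + 1) / θ n) * γ k *
          ∏ j ∈ Finset.Ico (k : ℤ) n, ((θ (j + 1) / θ j) / (1 - (θ (j + 1) / θ j) * γ j)))
      + (∑' k : {k : ℤ // n < k}, γ (k : ℤ) * ∏ j ∈ Finset.Ico n (k : ℤ), (1 + γ j)) + γ n
      ≤ T * M * (∑' k : {k : ℤ // k < n}, γ (k : ℤ))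
        + T * M * (∑' k : {k : ℤ // n < k}, γ (k : ℤ)) + T * M * γ n :=
        add_le_add (add_le_add hS1 hS2) hS3
    _ = T * M * ((∑' k : {k : ℤ // k < n}, γ (k : ℤ))
        + (∑' k : {k : ℤ // n < k}, γ (k : ℤ)) + γ n) := by ring
    _ = T * M * (∑' k : ℤ, γ k) := by rw [hsplitsum]
    _ < 1 := hfinal
end
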